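/- Let α(t) = (t⁶, t⁷ + t¹⁰ + t¹¹). Let A, B ∈ m ⊂ ℂ[[x,y]] define a singular formal vector field X = A ∂/∂x + B ∂/∂y which leaves the branch Γ₀ parametrized by α invariant, in the sense that the pullback along α of its dual form vanishes: A(α(t))·(7t⁶ + 10t⁹ + 11t¹⁰) − B(α(t))·6t⁵ = 0 in ℂ[[t]]. Then X has vanishing second jet: A, B ∈ m³. -/

import Mathlib

/-!
STATEMENT 10: a singular formal vector field leaving invariant the branch
`Γ₀` parametrized by `α(t) = (t⁶, t⁷ + t¹⁰ + t¹¹)` has vanishing second jet,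
i.e. `A, B ∈ m³`.
-/

open PowerSeries

/-- Substitution of `(x(t), y(t))` (both with zero constant term) into a
two-variable formal power series. -/
noncomputable def substPS (xt yt : PowerSeries ℂ) (f : MvPowerSeries (Fin 2) ℂ) :
    PowerSeries ℂ :=
  PowerSeries.mk fun k =>
    ∑ ij ∈ Finset.range (k + 1) ×ˢ Finset.range (k + 1),
      MvPowerSeries.coeff (Finsupp.single 0 ij.1 + Finsupp.single 1 ij.2) f *
        PowerSeries.coeff k (xt ^ ij.1 * yt ^ ij.2)

/-- The maximal ideal of `ℂ[[x,y]]`: series with zero constant term. -/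
noncomputable def mIdeal : Ideal (MvPowerSeries (Fin 2) ℂ) :=
  RingHom.ker (MvPowerSeries.constantCoeff (σ := Fin 2) (R := ℂ))

/-- The `x`-component `t⁶` of `α`. -/
noncomputable def alphaX : PowerSeries ℂ := PowerSeries.X ^ 6

/-- The `y`-component `t⁷ + t¹⁰ + t¹¹` of `α`. -/
noncomputable def alphaY : PowerSeries ℂ :=
  PowerSeries.X ^ 7 + PowerSeries.X ^ 10 + PowerSeries.X ^ 11

/-! ### Auxiliary material -/

/-- The exponent `(i, j)` as a finitely supported function on `Fin 2`. -/
noncomputable def d2 (i j : ℕ) : Fin 2 →₀ ℕ := Finsupp.single 0 i + Finsupp.single 1 j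

/-- Abbreviation for the coefficient of `x^i y^j`. -/
noncomputable def cf (f : MvPowerSeries (Fin 2) ℂ) (i j : ℕ) : ℂ :=
  MvPowerSeries.coeff (d2 i j) f

lemma d2_apply0 (i j : ℕ) : d2 i j 0 = i := by simp [d2]
lemma d2_apply1 (i j : ℕ) : d2 i j 1 = j := by simp [d2]

lemma eq_d2 (e : Fin 2 →₀ ℕ) : e = d2 (e 0) (e 1) := by
  ext s; fin_cases s <;> simp [d2_apply0, d2_apply1]

lemma d2_le (a b i j : ℕ) : d2 a b ≤ d2 i j ↔ a ≤ i ∧ b ≤ j := by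
  rw [Finsupp.le_def]
  constructor
  · intro h
    exact ⟨by simpa [d2_apply0] using h 0, by simpa [d2_apply1] using h 1⟩
  · rintro ⟨h1, h2⟩ s
    fin_cases s <;> simpa [d2_apply0, d2_apply1]

lemma d2_sub (i j a b : ℕ) : d2 i j - d2 a b = d2 (i - a) (j - b) := by
  ext s
  rw [Finsupp.tsub_apply]
  fin_cases s <;> simp [d2_apply0, d2_apply1]

lemma d2_add (i j a b : ℕ) : d2 i j + d2 a b = d2 (i + a) (j + b) := by
  simp only [d2, Finsupp.single_add]
  abel

lemma mono_eq (i j : ℕ) :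
    (MvPowerSeries.monomial (d2 i j) 1 : MvPowerSeries (Fin 2) ℂ)
      = MvPowerSeries.X 0 ^ i * MvPowerSeries.X 1 ^ j := by
  rw [MvPowerSeries.X_pow_eq, MvPowerSeries.X_pow_eq, MvPowerSeries.monomial_mul_monomial,
    one_mul, d2]

/-- A series whose coefficients vanish in degree `≤ 2` lies in `m³`. -/
lemma mem_mIdeal_cube (f : MvPowerSeries (Fin 2) ℂ)
    (h00 : cf f 0 0 = 0) (h10 : cf f 1 0 = 0) (h01 : cf f 0 1 = 0)
    (h20 : cf f 2 0 = 0) (h11 : cf f 1 1 = 0) (h02 : cf f 0 2 = 0) :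
    f ∈ mIdeal ^ 3 := by
  rw [cf] at h00 h10 h01 h20 h11 h02
  set I : Ideal (MvPowerSeries (Fin 2) ℂ) :=
    Ideal.span {MvPowerSeries.X 0, MvPowerSeries.X 1} with hI
  have hXI : MvPowerSeries.X 0 ∈ I := Ideal.subset_span (by simp)
  have hYI : MvPowerSeries.X 1 ∈ I := Ideal.subset_span (by simp)
  have hIm : I ≤ mIdeal := by
    rw [hI, Ideal.span_le]
    rintro x (rfl | rfl) <;>
      simp [mIdeal, RingHom.mem_ker, MvPowerSeries.constantCoeff_X]
  refine Ideal.pow_right_mono hIm 3 ?_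
  set P : MvPowerSeries (Fin 2) ℂ := fun e => MvPowerSeries.coeff (e + d2 3 0) f with hP
  set Q : MvPowerSeries (Fin 2) ℂ :=
    fun e => if e 0 = 0 then MvPowerSeries.coeff (e + d2 2 1) f else 0 with hQ
  set R : MvPowerSeries (Fin 2) ℂ :=
    fun e => if e 0 = 0 then MvPowerSeries.coeff (e + d2 1 2) f else 0 with hR
  set S : MvPowerSeries (Fin 2) ℂ :=
    fun e => if e 0 = 0 then MvPowerSeries.coeff (e + d2 0 3) f else 0 with hS
  have key : f = MvPowerSeries.monomial (d2 3 0) 1 * P + MvPowerSeries.monomial (d2 2 1) 1 * Q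
      + MvPowerSeries.monomial (d2 1 2) 1 * R + MvPowerSeries.monomial (d2 0 3) 1 * S := by
    apply MvPowerSeries.ext; intro e
    obtain ⟨i, j, rfl⟩ : ∃ i j, e = d2 i j := ⟨e 0, e 1, eq_d2 e⟩
    have hPv : ∀ m : Fin 2 →₀ ℕ,
        MvPowerSeries.coeff m P = MvPowerSeries.coeff (m + d2 3 0) f := fun m => rfl
    have hQv : ∀ m : Fin 2 →₀ ℕ, MvPowerSeries.coeff m Q
        = if m 0 = 0 then MvPowerSeries.coeff (m + d2 2 1) f else 0 := fun m => rfl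
    have hRv : ∀ m : Fin 2 →₀ ℕ, MvPowerSeries.coeff m R
        = if m 0 = 0 then MvPowerSeries.coeff (m + d2 1 2) f else 0 := fun m => rfl
    have hSv : ∀ m : Fin 2 →₀ ℕ, MvPowerSeries.coeff m S
        = if m 0 = 0 then MvPowerSeries.coeff (m + d2 0 3) f else 0 := fun m => rfl
    rw [map_add, map_add, map_add,
      MvPowerSeries.coeff_monomial_mul, MvPowerSeries.coeff_monomial_mul,
      MvPowerSeries.coeff_monomial_mul, MvPowerSeries.coeff_monomial_mul]
    simp only [hPv, hQv, hRv, hSv, d2_le, d2_sub, d2_add, d2_apply0, one_mul]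
    rcases Nat.lt_or_ge i 3 with hi | hi
    · interval_cases i
      · -- i = 0
        rw [if_neg (by omega), if_neg (by omega), if_neg (by omega)]
        rcases Nat.lt_or_ge j 3 with hj | hj
        · rw [if_neg (by omega)]
          interval_cases j
          · simpa using h00
          · simpa using h01
          · simpa using h02
        · rw [if_pos ⟨le_refl 0, hj⟩, if_pos (by norm_num),
            show (0:ℕ) - 0 + 0 = 0 by norm_num, show j - 3 + 3 = j by omega]
          ring
      · -- i = 1
        rw [if_neg (by omega), if_neg (by omega)]
        rcases Nat.lt_or_ge j 2 with hj | hj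
        · rw [if_neg (by omega)]
          interval_cases j
          · split_ifs <;> first | simpa using h10 | omega | simp_all
          · split_ifs <;> first | simpa using h11 | omega | simp_all
        · rw [if_pos ⟨by omega, hj⟩,
            show (1:ℕ) - 1 + 1 = 1 by norm_num, show j - 2 + 2 = j by omega]
          split_ifs <;> first | rfl | ring1 | omega | simp_all
      · -- i = 2
        rw [if_neg (by omega)]
        rcases Nat.lt_or_ge j 1 with hj | hj
        · rw [if_neg (by omega)]
          interval_cases j
          split_ifs <;> first | simpa using h20 | omega | simp_all
        · rw [if_pos ⟨by omega, hj⟩,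
            show (2:ℕ) - 2 + 2 = 2 by norm_num, show j - 1 + 1 = j by omega]
          split_ifs <;> first | rfl | ring1 | omega | simp_all
    · -- i ≥ 3
      rw [if_pos ⟨hi, Nat.zero_le _⟩,
        show i - 3 + 3 = i by omega, show j - 0 + 0 = j by omega]
      split_ifs <;> first | rfl | ring1 | omega | simp_all
  rw [key]
  have m30 : (MvPowerSeries.monomial (d2 3 0) 1 : MvPowerSeries (Fin 2) ℂ) ∈ I ^ 3 := by
    rw [mono_eq]; simpa using Ideal.pow_mem_pow hXI 3
  have m21 : (MvPowerSeries.monomial (d2 2 1) 1 : MvPowerSeries (Fin 2) ℂ) ∈ I ^ 3 := by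
    rw [mono_eq, pow_one, pow_succ]
    exact Ideal.mul_mem_mul (Ideal.pow_mem_pow hXI 2) hYI
  have m12 : (MvPowerSeries.monomial (d2 1 2) 1 : MvPowerSeries (Fin 2) ℂ) ∈ I ^ 3 := by
    rw [mono_eq, pow_one, mul_comm, pow_succ]
    exact Ideal.mul_mem_mul (Ideal.pow_mem_pow hYI 2) hXI
  have m03 : (MvPowerSeries.monomial (d2 0 3) 1 : MvPowerSeries (Fin 2) ℂ) ∈ I ^ 3 := by
    rw [mono_eq, pow_zero, one_mul]
    exact Ideal.pow_mem_pow hYI 3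
  exact add_mem (add_mem (add_mem (Ideal.mul_mem_right _ _ m30) (Ideal.mul_mem_right _ _ m21))
    (Ideal.mul_mem_right _ _ m12)) (Ideal.mul_mem_right _ _ m03)

/-! ### Coefficients of the pullback along `α` -/

/-- The unit `u = 1 + t³ + t⁴` with `y(t) = t⁷ u`. -/
noncomputable def uu : PowerSeries ℂ := 1 + PowerSeries.X ^ 3 + PowerSeries.X ^ 4

lemma coeff_uu (m : ℕ) : PowerSeries.coeff m uu
    = (if m = 0 then 1 else 0) + (if m = 3 then 1 else 0) + (if m = 4 then 1 else 0) := by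
  rw [uu, map_add, map_add, PowerSeries.coeff_one, PowerSeries.coeff_X_pow,
    PowerSeries.coeff_X_pow]

lemma coeff_uu2 (m : ℕ) : PowerSeries.coeff m (uu ^ 2)
    = (if m = 0 then 1 else 0) + 2 * (if m = 3 then 1 else 0) + 2 * (if m = 4 then 1 else 0)
      + (if m = 6 then 1 else 0) + 2 * (if m = 7 then 1 else 0) + (if m = 8 then 1 else 0) := by
  have h : uu ^ 2 = 1 + (X ^ 3 + X ^ 3) + (X ^ 4 + X ^ 4) + X ^ 6 + (X ^ 7 + X ^ 7) + X ^ 8 := by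
    rw [uu]; ring
  rw [h]
  simp only [map_add, PowerSeries.coeff_one, PowerSeries.coeff_X_pow]
  ring

lemma coeff_axy (i j k : ℕ) : PowerSeries.coeff k (alphaX ^ i * alphaY ^ j)
    = if 6 * i + 7 * j ≤ k then PowerSeries.coeff (k - (6 * i + 7 * j)) (uu ^ j) else 0 := by
  have h1 : alphaX ^ i * alphaY ^ j = uu ^ j * X ^ (6 * i + 7 * j) := by
    rw [alphaX, alphaY, show (X ^ 7 + X ^ 10 + X ^ 11 : PowerSeries ℂ) = X ^ 7 * uu by
      rw [uu]; ring, mul_pow, ← pow_mul, ← pow_mul, pow_add]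
    ring
  rw [h1, PowerSeries.coeff_mul_X_pow']

lemma substPS_coeff_gen (f : MvPowerSeries (Fin 2) ℂ) (k : ℕ) (h2 : 2 ≤ k) (h17 : k ≤ 17) :
    PowerSeries.coeff k (substPS alphaX alphaY f) =
      cf f 1 0 * (if 6 ≤ k then if k - 6 = 0 then 1 else 0 else 0)
    + cf f 0 1 * (if 7 ≤ k then PowerSeries.coeff (k - 7) uu else 0)
    + cf f 2 0 * (if 12 ≤ k then if k - 12 = 0 then 1 else 0 else 0)
    + cf f 1 1 * (if 13 ≤ k then PowerSeries.coeff (k - 13) uu else 0)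
    + cf f 0 2 * (if 14 ≤ k then PowerSeries.coeff (k - 14) (uu ^ 2) else 0) := by
  classical
  rw [substPS, PowerSeries.coeff_mk]
  have hT : ({((1:ℕ),(0:ℕ)), (0,1), (2,0), (1,1), (0,2)} : Finset (ℕ × ℕ))
      ⊆ Finset.range (k + 1) ×ˢ Finset.range (k + 1) := by
    intro p hp
    simp only [Finset.mem_insert, Finset.mem_singleton] at hp
    simp only [Finset.mem_product, Finset.mem_range]
    rcases hp with rfl | rfl | rfl | rfl | rfl <;> omega
  have hz : ∀ p ∈ Finset.range (k + 1) ×ˢ Finset.range (k + 1),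
      p ∉ ({((1:ℕ),(0:ℕ)), (0,1), (2,0), (1,1), (0,2)} : Finset (ℕ × ℕ)) →
      MvPowerSeries.coeff (Finsupp.single 0 p.1 + Finsupp.single 1 p.2) f *
        PowerSeries.coeff k (alphaX ^ p.1 * alphaY ^ p.2) = 0 := by
    rintro ⟨a, b⟩ _ hpT
    simp only [Finset.mem_insert, Finset.mem_singleton, Prod.mk.injEq, not_or] at hpT
    rw [coeff_axy]
    by_cases hab : a = 0 ∧ b = 0
    · obtain ⟨rfl, rfl⟩ := hab
      rw [if_pos (by omega), pow_zero, PowerSeries.coeff_one, if_neg (by omega), mul_zero]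
    · rw [if_neg (by omega), mul_zero]
  rw [← Finset.sum_subset hT hz]
  rw [Finset.sum_insert (by decide), Finset.sum_insert (by decide),
    Finset.sum_insert (by decide), Finset.sum_insert (by decide), Finset.sum_singleton]
  simp only [coeff_axy]
  norm_num [cf, d2, pow_zero, PowerSeries.coeff_one]
  ring

lemma substPS_coeff_one (f : MvPowerSeries (Fin 2) ℂ) :
    PowerSeries.coeff 1 (substPS alphaX alphaY f) = 0 := by
  rw [substPS, PowerSeries.coeff_mk]
  apply Finset.sum_eq_zero
  rintro ⟨a, b⟩ _
  rw [coeff_axy]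
  split_ifs with h
  · obtain ⟨rfl, rfl⟩ : a = 0 ∧ b = 0 := by omega
    rw [pow_zero, PowerSeries.coeff_one]
    norm_num
  · rw [mul_zero]

theorem invariant_vector_field_of_gamma0_has_zero_two_jet
    (A B : MvPowerSeries (Fin 2) ℂ)
    (hA : A ∈ mIdeal) (hB : B ∈ mIdeal)
    (hinv : substPS alphaX alphaY A *
          (PowerSeries.C (R := ℂ) 7 * PowerSeries.X ^ 6 + PowerSeries.C (R := ℂ) 10 * PowerSeries.X ^ 9 +
            PowerSeries.C (R := ℂ) 11 * PowerSeries.X ^ 10) -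
        substPS alphaX alphaY B * (PowerSeries.C (R := ℂ) 6 * PowerSeries.X ^ 5) = 0) :
    A ∈ mIdeal ^ 3 ∧ B ∈ mIdeal ^ 3 := by
  set SA := substPS alphaX alphaY A with hSA
  set SB := substPS alphaX alphaY B with hSB
  -- the basic family of coefficient identities
  have hkey : ∀ n : ℕ,
      (7:ℂ) * (if 6 ≤ n then PowerSeries.coeff (n-6) SA else 0)
    + 10 * (if 9 ≤ n then PowerSeries.coeff (n-9) SA else 0)
    + 11 * (if 10 ≤ n then PowerSeries.coeff (n-10) SA else 0)
    - 6 * (if 5 ≤ n then PowerSeries.coeff (n-5) SB else 0) = 0 := by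
    intro n
    have e1 : SA * (C (R := ℂ) 7 * X ^ 6 + C (R := ℂ) 10 * X ^ 9 + C (R := ℂ) 11 * X ^ 10) - SB * (C (R := ℂ) 6 * X ^ 5)
        = (C (R := ℂ) 7 * (SA * X ^ 6) + C (R := ℂ) 10 * (SA * X ^ 9) + C (R := ℂ) 11 * (SA * X ^ 10))
          - C (R := ℂ) 6 * (SB * X ^ 5) := by ring
    have h0 : PowerSeries.coeff n ((C (R := ℂ) 7 * (SA * X ^ 6) + C (R := ℂ) 10 * (SA * X ^ 9)
        + C (R := ℂ) 11 * (SA * X ^ 10)) - C (R := ℂ) 6 * (SB * X ^ 5)) = 0 := by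
      rw [← e1, hinv, map_zero]
    simpa only [map_sub, map_add, PowerSeries.coeff_C_mul,
      PowerSeries.coeff_mul_X_pow'] using h0
  -- coefficients of the pullbacks
  have cA : ∀ k : ℕ, 2 ≤ k → k ≤ 17 → PowerSeries.coeff k SA =
      cf A 1 0 * (if 6 ≤ k then if k - 6 = 0 then 1 else 0 else 0)
    + cf A 0 1 * (if 7 ≤ k then PowerSeries.coeff (k - 7) uu else 0)
    + cf A 2 0 * (if 12 ≤ k then if k - 12 = 0 then 1 else 0 else 0)
    + cf A 1 1 * (if 13 ≤ k then PowerSeries.coeff (k - 13) uu else 0)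
    + cf A 0 2 * (if 14 ≤ k then PowerSeries.coeff (k - 14) (uu ^ 2) else 0) := fun k h2 h17 =>
    substPS_coeff_gen A k h2 h17
  have cB : ∀ k : ℕ, 2 ≤ k → k ≤ 17 → PowerSeries.coeff k SB =
      cf B 1 0 * (if 6 ≤ k then if k - 6 = 0 then 1 else 0 else 0)
    + cf B 0 1 * (if 7 ≤ k then PowerSeries.coeff (k - 7) uu else 0)
    + cf B 2 0 * (if 12 ≤ k then if k - 12 = 0 then 1 else 0 else 0)
    + cf B 1 1 * (if 13 ≤ k then PowerSeries.coeff (k - 13) uu else 0)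
    + cf B 0 2 * (if 14 ≤ k then PowerSeries.coeff (k - 14) (uu ^ 2) else 0) := fun k h2 h17 =>
    substPS_coeff_gen B k h2 h17
  have cA1 : PowerSeries.coeff 1 SA = 0 := substPS_coeff_one A
  have cA2 : PowerSeries.coeff 2 SA = 0 := by rw [cA 2 (by norm_num) (by norm_num)]; norm_num
  have cA3 : PowerSeries.coeff 3 SA = 0 := by rw [cA 3 (by norm_num) (by norm_num)]; norm_num
  have cA4 : PowerSeries.coeff 4 SA = 0 := by rw [cA 4 (by norm_num) (by norm_num)]; norm_num
  have cA5 : PowerSeries.coeff 5 SA = 0 := by rw [cA 5 (by norm_num) (by norm_num)]; norm_num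
  have cA6 : PowerSeries.coeff 6 SA = cf A 1 0 := by
    rw [cA 6 (by norm_num) (by norm_num)]; norm_num
  have cA7 : PowerSeries.coeff 7 SA = cf A 0 1 := by
    rw [cA 7 (by norm_num) (by norm_num)]; norm_num [coeff_uu]
  have cA8 : PowerSeries.coeff 8 SA = 0 := by
    rw [cA 8 (by norm_num) (by norm_num)]; norm_num [coeff_uu]
  have cA9 : PowerSeries.coeff 9 SA = 0 := by
    rw [cA 9 (by norm_num) (by norm_num)]; norm_num [coeff_uu]
  have cA10 : PowerSeries.coeff 10 SA = cf A 0 1 := by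
    rw [cA 10 (by norm_num) (by norm_num)]; norm_num [coeff_uu]
  have cA11 : PowerSeries.coeff 11 SA = cf A 0 1 := by
    rw [cA 11 (by norm_num) (by norm_num)]; norm_num [coeff_uu]
  have cA12 : PowerSeries.coeff 12 SA = cf A 2 0 := by
    rw [cA 12 (by norm_num) (by norm_num)]; norm_num [coeff_uu]
  have cA13 : PowerSeries.coeff 13 SA = cf A 1 1 := by
    rw [cA 13 (by norm_num) (by norm_num)]; norm_num [coeff_uu]
  have cA14 : PowerSeries.coeff 14 SA = cf A 0 2 := by
    rw [cA 14 (by norm_num) (by norm_num)]; norm_num [coeff_uu, coeff_uu2]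
  have cA15 : PowerSeries.coeff 15 SA = 0 := by
    rw [cA 15 (by norm_num) (by norm_num)]; norm_num [coeff_uu, coeff_uu2]
  have cA16 : PowerSeries.coeff 16 SA = cf A 1 1 := by
    rw [cA 16 (by norm_num) (by norm_num)]; norm_num [coeff_uu, coeff_uu2]
  have cB6 : PowerSeries.coeff 6 SB = cf B 1 0 := by
    rw [cB 6 (by norm_num) (by norm_num)]; norm_num
  have cB7 : PowerSeries.coeff 7 SB = cf B 0 1 := by
    rw [cB 7 (by norm_num) (by norm_num)]; norm_num [coeff_uu]
  have cB8 : PowerSeries.coeff 8 SB = 0 := by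
    rw [cB 8 (by norm_num) (by norm_num)]; norm_num [coeff_uu]
  have cB10 : PowerSeries.coeff 10 SB = cf B 0 1 := by
    rw [cB 10 (by norm_num) (by norm_num)]; norm_num [coeff_uu]
  have cB12 : PowerSeries.coeff 12 SB = cf B 2 0 := by
    rw [cB 12 (by norm_num) (by norm_num)]; norm_num [coeff_uu]
  have cB13 : PowerSeries.coeff 13 SB = cf B 1 1 := by
    rw [cB 13 (by norm_num) (by norm_num)]; norm_num [coeff_uu]
  have cB14 : PowerSeries.coeff 14 SB = cf B 0 2 := by
    rw [cB 14 (by norm_num) (by norm_num)]; norm_num [coeff_uu, coeff_uu2]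
  have cB15 : PowerSeries.coeff 15 SB = 0 := by
    rw [cB 15 (by norm_num) (by norm_num)]; norm_num [coeff_uu, coeff_uu2]
  have cB16 : PowerSeries.coeff 16 SB = cf B 1 1 := by
    rw [cB 16 (by norm_num) (by norm_num)]; norm_num [coeff_uu, coeff_uu2]
  have cB17 : PowerSeries.coeff 17 SB = cf B 1 1 + 2 * cf B 0 2 := by
    rw [cB 17 (by norm_num) (by norm_num)]; norm_num [coeff_uu, coeff_uu2]; ring
  -- the linear equations
  have E11 : (6:ℂ) * cf B 1 0 = 0 := by
    have h := hkey 11; norm_num at h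
    linear_combination 7 * cA5 + 10 * cA2 + 11 * cA1 - 6 * cB6 - h
  have E12 : (7:ℂ) * cf A 1 0 - 6 * cf B 0 1 = 0 := by
    have h := hkey 12; norm_num at h
    linear_combination h - 7 * cA6 - 10 * cA3 - 11 * cA2 + 6 * cB7
  have E13 : (7:ℂ) * cf A 0 1 = 0 := by
    have h := hkey 13; norm_num at h
    linear_combination h - 7 * cA7 - 10 * cA4 - 11 * cA3 + 6 * cB8
  have E15 : (10:ℂ) * cf A 1 0 - 6 * cf B 0 1 = 0 := by
    have h := hkey 15; norm_num at h
    linear_combination h - 7 * cA9 - 10 * cA6 - 11 * cA5 + 6 * cB10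
  have E17 : (18:ℂ) * cf A 0 1 - 6 * cf B 2 0 = 0 := by
    have h := hkey 17; norm_num at h
    linear_combination h - 7 * cA11 - 10 * cA8 - 11 * cA7 + 6 * cB12
  have E18 : (7:ℂ) * cf A 2 0 - 6 * cf B 1 1 = 0 := by
    have h := hkey 18; norm_num at h
    linear_combination h - 7 * cA12 - 10 * cA9 - 11 * cA8 + 6 * cB13
  have E19 : (7:ℂ) * cf A 1 1 + 10 * cf A 0 1 - 6 * cf B 0 2 = 0 := by
    have h := hkey 19; norm_num at h
    linear_combination h - 7 * cA13 - 10 * cA10 - 11 * cA9 + 6 * cB14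
  have E20 : (7:ℂ) * cf A 0 2 + 21 * cf A 0 1 = 0 := by
    have h := hkey 20; norm_num at h
    linear_combination h - 7 * cA14 - 10 * cA11 - 11 * cA10 + 6 * cB15
  have E21 : (10:ℂ) * cf A 2 0 + 11 * cf A 0 1 - 6 * cf B 1 1 = 0 := by
    have h := hkey 21; norm_num at h
    linear_combination h - 7 * cA15 - 10 * cA12 - 11 * cA11 + 6 * cB16
  have E22 : (17:ℂ) * cf A 1 1 + 11 * cf A 2 0 - 6 * cf B 1 1 - 12 * cf B 0 2 = 0 := by
    have h := hkey 22; norm_num at h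
    linear_combination h - 7 * cA16 - 10 * cA13 - 11 * cA12 + 6 * cB17
  -- solve the linear system
  have hb10 : cf B 1 0 = 0 := by linear_combination E11 / 6
  have ha01 : cf A 0 1 = 0 := by linear_combination E13 / 7
  have ha10 : cf A 1 0 = 0 := by linear_combination (E15 - E12) / 3
  have hb01 : cf B 0 1 = 0 := by linear_combination (7 * ha10 - E12) / 6
  have hb20 : cf B 2 0 = 0 := by linear_combination (18 * ha01 - E17) / 6
  have ha02 : cf A 0 2 = 0 := by linear_combination (E20 - 21 * ha01) / 7
  have ha20 : cf A 2 0 = 0 := by linear_combination (E21 - E18 - 11 * ha01) / 3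
  have hb11 : cf B 1 1 = 0 := by linear_combination (7 * ha20 - E18) / 6
  have ha11 : cf A 1 1 = 0 := by
    linear_combination (E22 - 2 * E19 - 11 * ha20 + 6 * hb11 + 20 * ha01) / 3
  have hb02 : cf B 0 2 = 0 := by linear_combination (7 * ha11 + 10 * ha01 - E19) / 6
  -- zero constant terms
  have hA0 : cf A 0 0 = 0 := by
    rw [cf, show d2 0 0 = 0 by simp [d2], MvPowerSeries.coeff_zero_eq_constantCoeff]
    simpa [mIdeal, RingHom.mem_ker] using hA
  have hB0 : cf B 0 0 = 0 := by
    rw [cf, show d2 0 0 = 0 by simp [d2], MvPowerSeries.coeff_zero_eq_constantCoeff]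
    simpa [mIdeal, RingHom.mem_ker] using hB
  exact ⟨mem_mIdeal_cube A hA0 ha10 ha01 ha20 ha11 ha02,
    mem_mIdeal_cube B hB0 hb10 hb01 hb20 hb11 hb02⟩
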